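/- arXiv:0804.0154 — 8 statements merged into one kernel-verified Lean document; each statement's English description precedes it below -/
import Mathlib

section
/- Let I be a set and let p be a real number with 1 ≤ p < ∞. The map h_p : B_1(I) → B_p(I) sending x = (x_i)_{i∈I} to (sgn(x_i)·|x_i|^{1/p})_{i∈I} is a homeomorphism, where both B_1(I) and B_p(I) carry the subspace topology induced by the product topology on ℝ^I. -/
open Set

/-- `B_p(I) = {x ∈ ℝ^I : (|x_i|^p) summable and ∑ |x_i|^p ≤ 1}`. -/
noncomputable def BpBall (I : Type*) (p : ℝ) : Set (I → ℝ) :=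
  {x | Summable (fun i => |x i| ^ p) ∧ ∑' i, |x i| ^ p ≤ 1}

noncomputable def signPow (c : ℝ) (t : ℝ) : ℝ := Real.sign t * |t| ^ c

lemma signPow_eq (c : ℝ) (hc : 0 < c) (t : ℝ) :
    signPow c t = (max t 0) ^ c - (max (-t) 0) ^ c := by
  rcases lt_trichotomy t 0 with h | h | h
  · simp [signPow, Real.sign_of_neg h, abs_of_neg h, max_eq_right h.le,
      max_eq_left (by linarith : (0:ℝ) ≤ -t), Real.zero_rpow hc.ne']
  · simp [signPow, h, Real.zero_rpow hc.ne']
  · simp [signPow, Real.sign_of_pos h, abs_of_pos h, max_eq_left h.le,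
      max_eq_right (by linarith : -t ≤ (0:ℝ)), Real.zero_rpow hc.ne']

lemma continuous_signPow (c : ℝ) (hc : 0 < c) : Continuous (signPow c) := by
  have : signPow c = fun t => (max t 0) ^ c - (max (-t) 0) ^ c := by
    funext t; exact signPow_eq c hc t
  rw [this]
  refine Continuous.sub ?_ ?_ <;>
  · rw [continuous_iff_continuousAt]
    intro x
    exact ContinuousAt.rpow_const (by fun_prop) (Or.inr hc.le)

lemma abs_signPow (c : ℝ) (hc : 0 < c) (t : ℝ) : |signPow c t| = |t| ^ c := by
  rcases lt_trichotomy t 0 with h | h | h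
  · rw [signPow, Real.sign_of_neg h]
    rw [abs_mul, abs_neg, abs_one, one_mul,
      abs_of_nonneg (Real.rpow_nonneg (abs_nonneg t) c)]
  · simp [signPow, h, Real.zero_rpow hc.ne']
  · rw [signPow, Real.sign_of_pos h, one_mul,
      abs_of_nonneg (Real.rpow_nonneg (abs_nonneg t) c)]

lemma sign_signPow (c : ℝ) (hc : 0 < c) (t : ℝ) :
    Real.sign (signPow c t) = Real.sign t := by
  rcases lt_trichotomy t 0 with h | h | h
  · have habs : (0:ℝ) < |t| ^ c := Real.rpow_pos_of_pos (abs_pos.2 h.ne) c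
    rw [signPow, Real.sign_of_neg h, Real.sign_of_neg (by nlinarith)]
  · simp [signPow, h]
  · have habs : (0:ℝ) < |t| ^ c := Real.rpow_pos_of_pos (abs_pos.2 h.ne') c
    rw [signPow, Real.sign_of_pos h, Real.sign_of_pos (by nlinarith)]

lemma real_sign_mul_abs (t : ℝ) : Real.sign t * |t| = t := by
  rcases lt_trichotomy t 0 with h | h | h
  · rw [Real.sign_of_neg h, abs_of_neg h]; ring
  · simp [h]
  · rw [Real.sign_of_pos h, abs_of_pos h, one_mul]

lemma signPow_comp (c d : ℝ) (hc : 0 < c) (hd : 0 < d) (hcd : c * d = 1) (t : ℝ) :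
    signPow d (signPow c t) = t := by
  rw [signPow, sign_signPow c hc, abs_signPow c hc, ← Real.rpow_mul (abs_nonneg t), hcd,
    Real.rpow_one, real_sign_mul_abs t]

lemma mem_BpBall_map {I : Type*} {p q : ℝ} (hp : 0 < p) (hq : 0 < q) {x : I → ℝ}
    (hx : x ∈ BpBall I p) (hpq : q * (p / q) = p) :
    (fun i => signPow (p / q) (x i)) ∈ BpBall I q := by
  have key : ∀ i, |signPow (p / q) (x i)| ^ q = |x i| ^ p := by
    intro i
    rw [abs_signPow _ (by positivity), ← Real.rpow_mul (abs_nonneg _)]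
    rw [div_mul_eq_mul_div, mul_comm, ← div_mul_eq_mul_div, div_self hq.ne', one_mul]
  constructor
  · simpa [key] using hx.1
  · simpa [key] using hx.2

/-- For `1 ≤ p < ∞`, the map `h_p : B_1(I) → B_p(I)`,
`x ↦ (sgn(x_i)·|x_i|^{1/p})_i`, is a homeomorphism (subspace topologies induced
by the product topology on `ℝ^I`). -/
theorem hp_homeomorph (I : Type*) (p : ℝ) (hp : 1 ≤ p) :
    ∃ h : (BpBall I 1) ≃ₜ (BpBall I p),
      ∀ x : BpBall I 1, ∀ i : I,
        (h x : I → ℝ) i = Real.sign ((x : I → ℝ) i) * |(x : I → ℝ) i| ^ (1 / p) := by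
  have hp0 : 0 < p := lt_of_lt_of_le one_pos hp
  have hip : 0 < 1 / p := by positivity
  refine ⟨{ toFun := fun x => ⟨fun i => signPow (1 / p) (x.1 i), by
              have := mem_BpBall_map (p := 1) (q := p) one_pos hp0 x.2 (by field_simp)
              simpa using this⟩
            invFun := fun y => ⟨fun i => signPow p (y.1 i), by
              have := mem_BpBall_map (p := p) (q := 1) hp0 one_pos y.2 (by ring)
              simpa using this⟩
            left_inv := fun x => by
              ext i
              exact signPow_comp (1/p) p hip hp0 (by field_simp) (x.1 i)
            right_inv := fun y => by
              ext i
              exact signPow_comp p (1/p) hp0 hip (by field_simp) (y.1 i)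
            continuous_toFun := by
              refine Continuous.subtype_mk ?_ _
              exact continuous_pi fun i =>
                (continuous_signPow _ hip).comp ((continuous_apply i).comp continuous_subtype_val)
            continuous_invFun := by
              refine Continuous.subtype_mk ?_ _
              exact continuous_pi fun i =>
                (continuous_signPow _ hp0).comp ((continuous_apply i).comp continuous_subtype_val) },
    fun x i => rfl⟩
end

section
/- Let (I_n)_{n∈ℕ} be a family of sets and let I := Σ_{n∈ℕ} I_n be their disjoint union. For each n ∈ ℕ let F_n be a closed subset of [0,1]^{I_n} with F_n ⊆ c₀(I_n). Then the product space ∏_{n∈ℕ} F_n (with the product topology) is homeomorphic to a closed subset F of [0,1]^I satisfying F ⊆ c₀(I); one such F is the image of ∏_{n∈ℕ} F_n under the map that multiplies all coordinates in the n-th block I_n by 1/(n+1). -/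
open Set Topology

/-- `c₀(I) = {x ∈ ℝ^I : ∀ ε > 0, {i : |x_i| ≥ ε} is finite}`. -/
def czero (I : Type*) : Set (I → ℝ) := {x | ∀ ε > 0, {i | ε ≤ |x i|}.Finite}

/-- If each `F_n` is a closed subset of `[0,1]^{I_n}` contained in `c₀(I_n)`, then
`∏_n F_n` is homeomorphic to a closed subset `F` of `[0,1]^I` (`I = Σ_n I_n`) with
`F ⊆ c₀(I)`; one such `F` is the image of `∏_n F_n` under the map multiplying the
coordinates of the `n`-th block by `1/(n+1)`. -/
theorem prod_eberlein (I : ℕ → Type*) (F : ∀ n, Set (I n → ℝ))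
    (hcl : ∀ n, IsClosed (F n))
    (hcube : ∀ n, ∀ x ∈ F n, ∀ i, x i ∈ Set.Icc (0 : ℝ) 1)
    (hc0 : ∀ n, F n ⊆ czero (I n)) :
    let Φ : (∀ n, I n → ℝ) → ((Σ n, I n) → ℝ) := fun f p => f p.1 p.2 / ((p.1 : ℝ) + 1)
    let Fbig : Set ((Σ n, I n) → ℝ) := Φ '' {f | ∀ n, f n ∈ F n}
    IsClosed Fbig ∧ (∀ x ∈ Fbig, ∀ p, x p ∈ Set.Icc (0 : ℝ) 1) ∧
      Fbig ⊆ czero (Σ n, I n) ∧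
      ∃ h : (∀ n, ↥(F n)) ≃ₜ ↥Fbig,
        ∀ x : ∀ n, ↥(F n), (h x : (Σ n, I n) → ℝ) = Φ (fun n => (x n : I n → ℝ)) := by
  intro Φ Fbig
  have hΦcont : Continuous Φ := continuous_pi fun p =>
    ((continuous_apply p.2).comp (continuous_apply p.1)).div_const _
  have hΦinj : Function.Injective Φ := by
    intro f g h
    funext n i
    have h1 := congrFun h ⟨n, i⟩
    have hne : ((n : ℝ) + 1) ≠ 0 := by positivity
    simp only [Φ] at h1
    field_simp at h1
    exact h1
  have hcpt : ∀ n, IsCompact (F n) := fun n =>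
    (isCompact_univ_pi (fun _ => isCompact_Icc)).of_isClosed_subset (hcl n)
      (fun x hx => Set.mem_univ_pi.2 fun i => hcube n x hx i)
  have hsetc : IsCompact {f : ∀ n, I n → ℝ | ∀ n, f n ∈ F n} := by
    have heq : {f : ∀ n, I n → ℝ | ∀ n, f n ∈ F n} = Set.pi Set.univ F := by
      ext f; simp [Set.mem_univ_pi]
    rw [heq]; exact isCompact_univ_pi hcpt
  have hFbigCpt : IsCompact Fbig := hsetc.image hΦcont
  refine ⟨hFbigCpt.isClosed, ?_, ?_, ?_⟩
  · rintro x ⟨f, hf, rfl⟩ ⟨n, i⟩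
    have h01 := hcube n (f n) (hf n) i
    have hn0 : (0 : ℝ) ≤ (n : ℝ) := Nat.cast_nonneg n
    have hpos : (0 : ℝ) < (n : ℝ) + 1 := by positivity
    simp only [Φ, Set.mem_Icc]
    constructor
    · exact div_nonneg h01.1 hpos.le
    · exact (div_le_one hpos).2 (h01.2.trans (by linarith))
  · rintro x ⟨f, hf, rfl⟩ ε hε
    set N := ⌈1 / ε⌉₊ + 1 with hN
    have hsub : {p : Σ n, I n | ε ≤ |Φ f p|} ⊆
        ⋃ n ∈ Finset.range N, Sigma.mk n '' {i | ε ≤ |f n i|} := by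
      rintro ⟨n, i⟩ hp
      simp only [Set.mem_setOf_eq, Φ] at hp
      have hn0 : (0 : ℝ) ≤ (n : ℝ) := Nat.cast_nonneg n
      have hpos : (0 : ℝ) < (n : ℝ) + 1 := by positivity
      have habs' : |f n i / ((n : ℝ) + 1)| = |f n i| / ((n : ℝ) + 1) := by
        rw [abs_div, abs_of_pos hpos]
      rw [habs'] at hp
      have hle : ε ≤ |f n i| :=
        hp.trans (div_le_self (abs_nonneg _) (by linarith))
      have habs1 : |f n i| ≤ 1 := by
        have h01 := hcube n (f n) (hf n) i
        rw [abs_of_nonneg h01.1]; exact h01.2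
      have hn : n < N := by
        have h2 : ε * ((n : ℝ) + 1) ≤ 1 := ((le_div_iff₀ hpos).1 hp).trans habs1
        have h3 : (n : ℝ) + 1 ≤ 1 / ε := by
          rw [le_div_iff₀ hε]; linarith [mul_comm ε ((n : ℝ) + 1)]
        have h4 : (n : ℝ) + 1 ≤ (⌈1 / ε⌉₊ : ℝ) := h3.trans (Nat.le_ceil _)
        have h5 : n + 1 ≤ ⌈1 / ε⌉₊ := by exact_mod_cast h4
        omega
      exact Set.mem_biUnion (Finset.mem_range.2 hn) ⟨i, hle, rfl⟩
    exact Set.Finite.subset (Set.Finite.biUnion (Finset.range N).finite_toSet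
      (fun n _ => ((hc0 n (hf n)) ε hε).image _)) hsub
  · haveI : ∀ n, CompactSpace ↥(F n) := fun n => isCompact_iff_compactSpace.1 (hcpt n)
    have hmem : ∀ x : ∀ n, ↥(F n), Φ (fun n => (x n : I n → ℝ)) ∈ Fbig :=
      fun x => ⟨_, fun n => (x n).2, rfl⟩
    have hcont : Continuous (fun x : ∀ n, ↥(F n) =>
        (⟨Φ (fun n => (x n : I n → ℝ)), hmem x⟩ : ↥Fbig)) :=
      Continuous.subtype_mk
        (hΦcont.comp (continuous_pi fun n =>
          continuous_subtype_val.comp (continuous_apply n))) _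
    have hbij : Function.Bijective (fun x : ∀ n, ↥(F n) =>
        (⟨Φ (fun n => (x n : I n → ℝ)), hmem x⟩ : ↥Fbig)) := by
      constructor
      · intro a b h
        have hv : Φ (fun n => (a n : I n → ℝ)) = Φ (fun n => (b n : I n → ℝ)) :=
          congrArg Subtype.val h
        have h' : (fun n => ((a n : ↥(F n)) : I n → ℝ)) = (fun n => ((b n : ↥(F n)) : I n → ℝ)) := hΦinj hv
        funext n
        exact Subtype.ext (congrFun h' n)
      · rintro ⟨y, f, hf, rfl⟩
        exact ⟨fun n => ⟨f n, hf n⟩, rfl⟩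
    exact ⟨(Continuous.homeoOfEquivCompactToT2
      (f := Equiv.ofBijective _ hbij) hcont), fun x => rfl⟩
end

section
/- Let (I_n)_{n∈ℕ} be a family of sets and let I := Σ_{n∈ℕ} I_n be their disjoint union. For each n ∈ ℕ let F_n be a closed subset of [0,1]^{I_n} with F_n ⊆ B₁⁺(I_n). Then the product space ∏_{n∈ℕ} F_n (with the product topology) is homeomorphic to a closed subset F of [0,1]^I satisfying F ⊆ B₁⁺(I); one such F is the image of ∏_{n∈ℕ} F_n under the map that multiplies all coordinates in the n-th block I_n by 1/2^{n+1}. -/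
open Set Topology

/-- `B₁⁺(I) = {x ∈ [0,1]^I : (x_i) summable and ∑ x_i ≤ 1}`. -/
def B1plus (I : Type*) : Set (I → ℝ) :=
  {x | (∀ i, x i ∈ Set.Icc (0 : ℝ) 1) ∧ Summable x ∧ ∑' i, x i ≤ 1}

/-- If each `F_n` is a closed subset of `[0,1]^{I_n}` contained in `B₁⁺(I_n)`, then
`∏_n F_n` is homeomorphic to a closed subset `F` of `[0,1]^I` (`I = Σ_n I_n`) with
`F ⊆ B₁⁺(I)`; one such `F` is the image of `∏_n F_n` under the map multiplying the
coordinates of the `n`-th block by `1/2^{n+1}`. -/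
theorem prod_uniform_eberlein (I : ℕ → Type*) (F : ∀ n, Set (I n → ℝ))
    (hcl : ∀ n, IsClosed (F n))
    (hcube : ∀ n, ∀ x ∈ F n, ∀ i, x i ∈ Set.Icc (0 : ℝ) 1)
    (hB1 : ∀ n, F n ⊆ B1plus (I n)) :
    let Φ : (∀ n, I n → ℝ) → ((Σ n, I n) → ℝ) := fun f p => f p.1 p.2 / 2 ^ (p.1 + 1)
    let Fbig : Set ((Σ n, I n) → ℝ) := Φ '' {f | ∀ n, f n ∈ F n}
    IsClosed Fbig ∧ (∀ x ∈ Fbig, ∀ p, x p ∈ Set.Icc (0 : ℝ) 1) ∧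
      Fbig ⊆ B1plus (Σ n, I n) ∧
      ∃ h : (∀ n, ↥(F n)) ≃ₜ ↥Fbig,
        ∀ x : ∀ n, ↥(F n), (h x : (Σ n, I n) → ℝ) = Φ (fun n => (x n : I n → ℝ)) := by
  intro Φ Fbig
  -- each F n is compact
  have hcomp : ∀ n, IsCompact (F n) := fun n => by
    refine (isCompact_univ_pi (fun _ : I n => isCompact_Icc (a := (0:ℝ)) (b := 1))).of_isClosed_subset (hcl n) ?_
    intro x hx
    exact Set.mem_univ_pi.mpr (hcube n x hx)
  have hPset : {f : ∀ n, I n → ℝ | ∀ n, f n ∈ F n} = Set.pi Set.univ F := by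
    ext f; simp [Set.mem_univ_pi]
  have hPcomp : IsCompact {f : ∀ n, I n → ℝ | ∀ n, f n ∈ F n} := by
    rw [hPset]; exact isCompact_univ_pi hcomp
  have hΦcont : Continuous Φ := continuous_pi fun p =>
    ((continuous_apply p.2).comp (continuous_apply p.1)).div_const _
  have hclosed : IsClosed Fbig := (hPcomp.image hΦcont).isClosed
  have hpowpos : ∀ n : ℕ, (0:ℝ) < 2 ^ (n + 1) := fun n => by positivity
  have hpowone : ∀ n : ℕ, (1:ℝ) ≤ 2 ^ (n + 1) := fun n => one_le_pow₀ (by norm_num)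
  -- cube membership
  have hcube' : ∀ x ∈ Fbig, ∀ p, x p ∈ Set.Icc (0 : ℝ) 1 := by
    rintro x ⟨f, hf, rfl⟩ p
    have h01 := hcube p.1 (f p.1) (hf p.1) p.2
    constructor
    · exact div_nonneg h01.1 (hpowpos p.1).le
    · calc f p.1 p.2 / 2 ^ (p.1 + 1) ≤ f p.1 p.2 / 1 :=
            div_le_div_of_nonneg_left h01.1 (by norm_num) (hpowone p.1) |>.trans_eq rfl
        _ ≤ 1 := by rw [div_one]; exact h01.2
  -- B1plus membership
  have hB1' : Fbig ⊆ B1plus (Σ n, I n) := by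
    rintro x ⟨f, hf, rfl⟩
    refine ⟨fun p => hcube' _ ⟨f, hf, rfl⟩ p, ?_⟩
    have hnn : ∀ p : Σ n, I n, 0 ≤ f p.1 p.2 / 2 ^ (p.1 + 1) := fun p =>
      div_nonneg (hcube p.1 (f p.1) (hf p.1) p.2).1 (hpowpos p.1).le
    have hfib : ∀ n, Summable fun i : I n => f n i / 2 ^ (n + 1) := fun n =>
      ((hB1 n (hf n)).2.1).div_const _
    have hfibsum : ∀ n, (∑' i : I n, f n i / 2 ^ (n + 1)) ≤ (1:ℝ) / 2 ^ (n + 1) := by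
      intro n
      rw [tsum_div_const]
      exact (div_le_div_iff_of_pos_right (hpowpos n)).mpr (hB1 n (hf n)).2.2
    have hgeo : Summable fun n : ℕ => (1:ℝ) / 2 ^ (n + 1) := by
      have : Summable fun n : ℕ => ((1:ℝ)/2) ^ (n + 1) :=
        (summable_geometric_two.mul_right (1/2)).congr fun n => by
          rw [pow_succ]
      exact this.congr fun n => by rw [div_pow, one_pow]
    have hmaj : Summable fun n => ∑' i : I n, f n i / 2 ^ (n + 1) :=
      hgeo.of_nonneg_of_le (fun n => tsum_nonneg fun i => hnn ⟨n, i⟩) hfibsum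
    have hsg : Summable fun p : Σ n, I n => f p.1 p.2 / 2 ^ (p.1 + 1) :=
      (summable_sigma_of_nonneg hnn).mpr ⟨hfib, hmaj⟩
    refine ⟨hsg, ?_⟩
    have hts : (∑' p : Σ n, I n, f p.1 p.2 / 2 ^ (p.1 + 1))
        = ∑' n, ∑' i : I n, f n i / 2 ^ (n + 1) := Summable.tsum_sigma hsg
    have hgeosum : (∑' n : ℕ, (1:ℝ) / 2 ^ (n + 1)) = 1 := by
      have h1 : (∑' n : ℕ, ((1:ℝ)/2) ^ n * (1/2)) = 1 := by
        rw [tsum_mul_right, tsum_geometric_two]; norm_num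
      calc (∑' n : ℕ, (1:ℝ) / 2 ^ (n + 1)) = ∑' n : ℕ, ((1:ℝ)/2) ^ n * (1/2) := by
            refine tsum_congr fun n => ?_
            rw [← pow_succ, div_pow, one_pow]
        _ = 1 := h1
    calc (∑' p : Σ n, I n, f p.1 p.2 / 2 ^ (p.1 + 1))
        = ∑' n, ∑' i : I n, f n i / 2 ^ (n + 1) := hts
      _ ≤ ∑' n : ℕ, (1:ℝ) / 2 ^ (n + 1) := Summable.tsum_le_tsum hfibsum hmaj hgeo
      _ = 1 := hgeosum
  refine ⟨hclosed, hcube', hB1', ?_⟩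
  -- the homeomorphism
  haveI : ∀ n, CompactSpace ↥(F n) := fun n => isCompact_iff_compactSpace.mp (hcomp n)
  have hΦinj : Function.Injective Φ := by
    intro f g hfg
    funext n i
    have := congrFun hfg ⟨n, i⟩
    simpa [Φ, div_eq_div_iff (hpowpos n).ne' (hpowpos n).ne'] using this
  let e : (∀ n, ↥(F n)) ≃ ↥Fbig :=
    { toFun := fun x => ⟨Φ (fun n => (x n : I n → ℝ)), ⟨_, fun n => (x n).2, rfl⟩⟩
      invFun := fun y => fun n => ⟨y.2.choose n, y.2.choose_spec.1 n⟩
      left_inv := by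
        intro x
        have h : (⟨Φ (fun n => (x n : I n → ℝ)), ⟨_, fun n => (x n).2, rfl⟩⟩ : ↥Fbig).2.choose
            = fun n => (x n : I n → ℝ) := by
          apply hΦinj
          exact (⟨Φ (fun n => (x n : I n → ℝ)), ⟨_, fun n => (x n).2, rfl⟩⟩ :
            ↥Fbig).2.choose_spec.2
        funext n
        ext i
        exact congrFun (congrFun h n) i
      right_inv := by
        intro y
        ext p
        have := y.2.choose_spec.2
        exact congrFun this p }
  have hecont : Continuous e := by
    refine Continuous.subtype_mk ?_ _
    exact hΦcont.comp (continuous_pi fun n => continuous_subtype_val.comp (continuous_apply n))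
  exact ⟨hecont.homeoOfEquivCompactToT2 (f := e), fun x => rfl⟩
end

section
/- Let X be a set and let n ≥ 1 be an integer. The space σ_n(X), with the subspace topology induced by the product topology on {0,1}^X, is sequentially compact: every sequence in σ_n(X) has a subsequence converging (in {0,1}^X) to a point of σ_n(X). -/
open Set Filter Topology

/-- `σ_n(X) = {x ∈ {0,1}^X : |supp(x)| ≤ n}` (identifying `{0,1}` with `Bool`,
`supp(x) = {i : x i = true}`), as a subset of `X → Bool` with the product topology. -/
def sigmaSet (X : Type*) (n : ℕ) : Set (X → Bool) := {x | {i | x i = true}.encard ≤ n}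

/-- For `n ≥ 1`, `σ_n(X)` is sequentially compact: every sequence in `σ_n(X)` has a
subsequence converging (in `{0,1}^X`) to a point of `σ_n(X)`. -/
theorem sigmaSet_seqCompact (X : Type*) (n : ℕ) (hn : 1 ≤ n)
    (u : ℕ → (X → Bool)) (hu : ∀ k, u k ∈ sigmaSet X n) :
    ∃ l ∈ sigmaSet X n, ∃ φ : ℕ → ℕ, StrictMono φ ∧
      Tendsto (u ∘ φ) atTop (𝓝 l) := by
  classical
  set Y : Set X := ⋃ k, {i | u k i = true} with hY
  have hfin : ∀ k, {i | u k i = true}.Finite := fun k =>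
    Set.finite_of_encard_le_coe (hu k)
  have hYc : Y.Countable := Set.countable_iUnion fun k => (hfin k).countable
  haveI : Countable Y := hYc.to_subtype
  let v : ℕ → (Y → Bool) := fun k i => u k i
  obtain ⟨w, -, φ, hφ, hconv⟩ :=
    IsCompact.tendsto_subseq (x := v) isCompact_univ (fun k => mem_univ _)
  let l : X → Bool := fun i => if h : i ∈ Y then w ⟨i, h⟩ else false
  have hmem : ∀ k i, u k i = true → i ∈ Y := fun k i h => mem_iUnion.mpr ⟨k, h⟩
  have hpt : ∀ i, Tendsto (fun k => u (φ k) i) atTop (𝓝 (l i)) := by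
    intro i
    by_cases h : i ∈ Y
    · have := tendsto_pi_nhds.mp hconv ⟨i, h⟩
      simpa [l, h, v] using this
    · have hz : ∀ k, u (φ k) i = false := by
        intro k
        by_contra hc
        exact h (hmem _ _ (by simpa using hc))
      have : l i = false := by simp [l, h]
      rw [this]
      simp only [hz]; exact (tendsto_const_nhds : Tendsto (fun _ : ℕ => false) atTop _)
  refine ⟨l, ?_, φ, hφ, tendsto_pi_nhds.mpr hpt⟩
  by_contra hl
  rw [sigmaSet, Set.mem_setOf_eq, not_le] at hl
  obtain ⟨s, hs_sub, hs_card⟩ := Set.exists_subset_encard_eq (k := (n : ℕ∞) + 1)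
    (by exact_mod_cast Order.add_one_le_of_lt hl)
  have hsfin : s.Finite := Set.finite_of_encard_eq_coe hs_card
  have hev : ∀ᶠ k in atTop, ∀ i ∈ s, u (φ k) i = true := by
    rw [Set.Finite.eventually_all hsfin]
    intro i hi
    have hl_i : l i = true := hs_sub hi
    have h1 := hpt i
    rw [hl_i] at h1
    have := h1.eventually_mem ((isOpen_discrete ({true} : Set Bool)).mem_nhds rfl)
    simpa using this
  obtain ⟨k, hk⟩ := hev.exists
  have hsub : s ⊆ {i | u (φ k) i = true} := fun i hi => hk i hi
  have hle := (Set.encard_mono hsub).trans (hu (φ k))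
  rw [hs_card] at hle
  exact absurd hle (by exact_mod_cast Nat.not_succ_le_self n)
end

section
/- Let X be a set. The product space ∏_{k∈ℕ} σ_{k+1}(X), with the product topology, is sequentially compact. -/
open Set Filter Topology

/-- Each `σ_n(X)` is sequentially compact. -/
lemma sigmaSet_isSeqCompact (X : Type*) (n : ℕ) : IsSeqCompact (sigmaSet X n) := by
  induction n with
  | zero =>
    intro x hx
    have hx0 : ∀ j, x j = fun _ => false := by
      intro j
      have h := hx j
      simp only [sigmaSet, mem_setOf_eq, Nat.cast_zero, nonpos_iff_eq_zero,
        encard_eq_zero] at h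
      funext i
      by_contra hc
      have : i ∈ ({i | x j i = true} : Set X) := by
        simpa using Bool.not_eq_false (x j i) |>.mp hc
      simp [h] at this
    refine ⟨fun _ => false, by simp [sigmaSet], id, strictMono_id, ?_⟩
    have : (x ∘ id) = fun _ => (fun _ => false : X → Bool) := by
      funext j; exact hx0 j
    rw [this]
    exact tendsto_const_nhds
  | succ n ih =>
    intro x hx
    by_cases hfin : ∀ i, {j | x j i = true}.Finite
    · refine ⟨fun _ => false, by simp [sigmaSet], id, strictMono_id, ?_⟩
      rw [tendsto_pi_nhds]
      intro i
      rw [nhds_discrete, tendsto_pure]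
      have : ∀ᶠ j in atTop, j ∉ {j | x j i = true} := by
        rw [← Nat.cofinite_eq_atTop]
        exact Set.Finite.eventually_cofinite_notMem (hfin i)
      filter_upwards [this] with j hj
      simpa using hj
    · classical
      push_neg at hfin
      obtain ⟨i, hi⟩ := hfin
      have hinf : {j | x j i = true}.Infinite := hi
      set p : ℕ → Prop := fun j => x j i = true with hp
      have hpinf : (setOf p).Infinite := hinf
      have hnth : StrictMono (Nat.nth p) := Nat.nth_strictMono hpinf
      have hmem : ∀ j, x (Nat.nth p j) i = true := fun j => Nat.nth_mem_of_infinite hpinf j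
      set y : ℕ → X → Bool := fun j => Function.update (x (Nat.nth p j)) i false with hy
      have hysupp : ∀ j, {a | y j a = true} = {a | x (Nat.nth p j) a = true} \ {i} := by
        intro j
        ext a
        by_cases ha : a = i <;> simp [hy, Function.update, ha]
      have hymem : ∀ j, y j ∈ sigmaSet X n := by
        intro j
        have h1 : i ∈ {a | x (Nat.nth p j) a = true} := hmem j
        have h2 := Set.encard_diff_singleton_add_one h1
        have h3 : {a | x (Nat.nth p j) a = true}.encard ≤ (n : ℕ∞) + 1 := by
          have := hx (Nat.nth p j)
          simpa [sigmaSet, Nat.cast_add, Nat.cast_one] using this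
        rw [sigmaSet, mem_setOf_eq, hysupp j]
        have h4 : ({a | x (Nat.nth p j) a = true} \ {i}).encard + 1 ≤ (n : ℕ∞) + 1 := by
          rw [h2]; exact h3
        exact (ENat.add_le_add_iff_right (by simp)).mp h4
      obtain ⟨b, hb, ψ, hψ, htend⟩ := ih hymem
      refine ⟨Function.update b i true, ?_, Nat.nth p ∘ ψ, hnth.comp hψ, ?_⟩
      · have hsupp : {a | Function.update b i true a = true} = insert i {a | b a = true} := by
          ext a
          by_cases ha : a = i <;> simp [Function.update, ha]
        rw [sigmaSet, mem_setOf_eq, hsupp]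
        calc (insert i {a | b a = true}).encard ≤ {a | b a = true}.encard + 1 :=
              Set.encard_insert_le _ _
          _ ≤ (n : ℕ∞) + 1 := by
              exact add_le_add (show {a | b a = true}.encard ≤ (n : ℕ∞) from hb) le_rfl
          _ = ((n + 1 : ℕ) : ℕ∞) := by push_cast; ring
      · rw [tendsto_pi_nhds]
        intro a
        by_cases ha : a = i
        · subst ha
          have : (fun j => (x ∘ (Nat.nth p ∘ ψ)) j a) = fun _ => true := by
            funext j; exact hmem (ψ j)
          rw [show Function.update b a true a = true from Function.update_self a true b]
          rw [this]
          exact tendsto_const_nhds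
        · have heq : (fun j => (x ∘ (Nat.nth p ∘ ψ)) j a) = fun j => (y ∘ ψ) j a := by
            funext j
            simp [hy, Function.update, ha]
          rw [show Function.update b i true a = b a from Function.update_of_ne ha true b]
          rw [heq]
          have := tendsto_pi_nhds.mp htend a
          exact this
      
/-- Diagonal argument: a countable product of sequentially compact spaces is
sequentially compact. -/
lemma pi_seqCompact {Z : ℕ → Type*} [∀ k, TopologicalSpace (Z k)]
    (h : ∀ k (v : ℕ → Z k), ∃ l, ∃ φ : ℕ → ℕ, StrictMono φ ∧ Tendsto (v ∘ φ) atTop (𝓝 l))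
    (u : ℕ → ∀ k, Z k) :
    ∃ (l : ∀ k, Z k) (φ : ℕ → ℕ), StrictMono φ ∧ Tendsto (u ∘ φ) atTop (𝓝 l) := by
  choose lim θ hθmono hθtend using h
  set F : ℕ → ℕ → ℕ :=
    fun k => Nat.rec id (fun k f => f ∘ θ k (fun j => u (f j) k)) k with hFdef
  have hFstep : ∀ k, F (k + 1) = F k ∘ θ k (fun j => u (F k j) k) := fun _ => rfl
  have hFmono : ∀ k, StrictMono (F k) := by
    intro k
    induction k with
    | zero => exact strictMono_id
    | succ k ih => exact ih.comp (hθmono _ _)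
  have hshift : ∀ k d, ∃ g : ℕ → ℕ, (∀ j, j ≤ g j) ∧
      (∀ j, F (k + d) j = F k (g j)) := by
    intro k d
    induction d with
    | zero => exact ⟨id, fun j => le_rfl, fun j => rfl⟩
    | succ d ih =>
      obtain ⟨g, hg1, hg2⟩ := ih
      refine ⟨g ∘ θ (k + d) (fun j => u (F (k + d) j) (k + d)), ?_, ?_⟩
      · intro j
        exact le_trans ((hθmono _ _).le_apply) (hg1 _)
      · intro j
        have : F (k + (d + 1)) j
            = F (k + d) (θ (k + d) (fun j => u (F (k + d) j) (k + d)) j) := rfl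
        rw [this, hg2]
        rfl
  set φ : ℕ → ℕ := fun j => F (j + 1) j with hφdef
  have hφmono : StrictMono φ := by
    apply strictMono_nat_of_lt_succ
    intro j
    have h1 : φ (j + 1) = F (j + 1) (θ (j + 1) (fun i => u (F (j + 1) i) (j + 1)) (j + 1)) := rfl
    rw [h1]
    calc φ j = F (j + 1) j := rfl
      _ < F (j + 1) (j + 1) := hFmono (j + 1) (Nat.lt_succ_self j)
      _ ≤ _ := (hFmono (j + 1)).monotone ((hθmono _ _).le_apply)
  refine ⟨fun k => lim k (fun j => u (F k j) k), φ, hφmono, ?_⟩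
  rw [tendsto_pi_nhds]
  intro k
  choose m hm1 hm2 using hshift (k + 1)
  set mm : ℕ → ℕ := fun j => m (j - k) j with hmm
  have hmm_tendsto : Tendsto mm atTop atTop :=
    tendsto_atTop_mono (fun j => hm1 _ j) tendsto_id
  have hbase : Tendsto (fun j => u (F (k + 1) j) k) atTop
      (𝓝 (lim k (fun j => u (F k j) k))) := hθtend k (fun j => u (F k j) k)
  have hcomp : Tendsto (fun j => u (F (k + 1) (mm j)) k) atTop
      (𝓝 (lim k (fun j => u (F k j) k))) := hbase.comp hmm_tendsto
  apply hcomp.congr'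
  filter_upwards [eventually_ge_atTop k] with j hj
  have hj1 : (k + 1) + (j - k) = j + 1 := by omega
  have : F (j + 1) j = F (k + 1) (mm j) := by
    rw [hmm]
    have := hm2 (j - k) j
    rw [hj1] at this
    exact this
  show u (F (k + 1) (mm j)) k = (u ∘ φ) j k
  simp only [Function.comp, hφdef, this]

/-- The product space `∏_{k∈ℕ} σ_{k+1}(X)`, with the product topology, is
sequentially compact. -/
theorem prod_sigmaSet_seqCompact (X : Type*)
    (u : ℕ → (∀ k : ℕ, ↥(sigmaSet X (k + 1)))) :
    ∃ (l : ∀ k : ℕ, ↥(sigmaSet X (k + 1))) (φ : ℕ → ℕ), StrictMono φ ∧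
      Tendsto (u ∘ φ) atTop (𝓝 l) := by
  apply pi_seqCompact
  intro k v
  obtain ⟨a, ha, ψ, hψ, htend⟩ :=
    sigmaSet_isSeqCompact X (k + 1) (x := fun j => (v j : X → Bool)) (fun j => (v j).2)
  refine ⟨⟨a, ha⟩, ψ, hψ, ?_⟩
  rw [tendsto_subtype_rng]
  exact htend
end

section
/- Let I be a set and let F be a closed subset of [0,1]^I with F ⊆ ℓ⁰(I). Then there exist a sequence (Z_n)_{n∈ℕ} of closed subsets of {0,1}^I each consisting of elements with finite support, a closed subset Z of ∏_{n∈ℕ} Z_n, and a continuous surjection g : Z → F; explicitly, Z_n is the image of the preimage of F under the map (x^m)_{m∈ℕ} ↦ (∑_{m∈ℕ} x^m_i / 2^{m+1})_{i∈I} from ({0,1}^I)^ℕ to [0,1]^I under the n-th coordinate projection closure, Z is that preimage, and g is the restriction of this map. -/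
open Set Topology Filter

noncomputable def sApprox (t : ℝ) : ℕ → ℝ
  | 0 => 0
  | (m+1) => if sApprox t m + 1/2^(m+1) ≤ t then sApprox t m + 1/2^(m+1) else sApprox t m

noncomputable def dig (t : ℝ) (m : ℕ) : Bool :=
  if sApprox t m + 1/2^(m+1) ≤ t then true else false

lemma summable_dig (b : ℕ → Bool) :
    Summable (fun m => (if b m then (1:ℝ) else 0) / 2 ^ (m + 1)) := by
  have hg : Summable (fun m : ℕ => (1/2:ℝ)^(m+1)) := by
    simpa [pow_succ, mul_comm] using summable_geometric_two.mul_left (1/2 : ℝ)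
  refine hg.of_nonneg_of_le (fun m => by positivity) ?_
  intro m
  have h1 : (if b m then (1:ℝ) else 0) ≤ 1 := by split <;> norm_num
  have e : ((1:ℝ)/2)^(m+1) = 1 / 2^(m+1) := by rw [div_pow, one_pow]
  rw [e]
  gcongr

lemma sApprox_eq_sum (t : ℝ) (m : ℕ) :
    ∑ k ∈ Finset.range m, (if dig t k then (1:ℝ) else 0) / 2 ^ (k + 1) = sApprox t m := by
  induction m with
  | zero => simp [sApprox]
  | succ m ih =>
      rw [Finset.sum_range_succ, ih, sApprox, dig]
      split <;> simp

lemma sApprox_bounds (t : ℝ) (h0 : 0 ≤ t) (h1 : t ≤ 1) (m : ℕ) :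
    sApprox t m ≤ t ∧ t ≤ sApprox t m + (1/2)^m := by
  induction m with
  | zero => refine ⟨by simp [sApprox, h0], by simp [sApprox]; linarith⟩
  | succ m ih =>
      have key : ((1:ℝ)/2)^(m+1) + (1/2)^(m+1) = (1/2)^m := by ring
      have e : ((1:ℝ)/2)^(m+1) = 1/2^(m+1) := by rw [div_pow, one_pow]
      rw [sApprox]
      split
      · refine ⟨by assumption, ?_⟩
        rw [← e] at *
        linarith [ih.2]
      · refine ⟨ih.1, ?_⟩
        have h := not_le.mp (by assumption)
        rw [← e] at h
        linarith

lemma hasSum_dig (t : ℝ) (h0 : 0 ≤ t) (h1 : t ≤ 1) :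
    HasSum (fun m => (if dig t m then (1:ℝ) else 0) / 2 ^ (m + 1)) t := by
  have hsum := summable_dig (dig t)
  have hs := hsum.hasSum
  have hA : Tendsto (fun m => sApprox t m) atTop
      (𝓝 (∑' m, (if dig t m then (1:ℝ) else 0) / 2 ^ (m + 1))) := by
    simpa [sApprox_eq_sum] using hs.tendsto_sum_nat
  have hb := sApprox_bounds t h0 h1
  have habs : ∀ m, ‖sApprox t m - t‖ ≤ (1/2:ℝ)^m := by
    intro m
    have hp : (0:ℝ) ≤ (1/2)^m := by positivity
    rw [Real.norm_eq_abs, abs_le]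
    exact ⟨by linarith [(hb m).2], by linarith [(hb m).1]⟩
  have hg0 : Tendsto (fun m : ℕ => (1/2:ℝ)^m) atTop (𝓝 0) :=
    tendsto_pow_atTop_nhds_zero_of_lt_one (by norm_num) (by norm_num)
  have hB : Tendsto (fun m => sApprox t m) atTop (𝓝 t) := by
    have := (squeeze_zero_norm habs hg0).add_const t
    simpa using this
  rwa [tendsto_nhds_unique hA hB] at hs

/-- Dyadic representation of a closed `F ⊆ [0,1]^I` with `F ⊆ ℓ⁰(I)` (every element
tends to `0` along the cofinite filter): with `G((xᵐ)ₘ)ᵢ = ∑ₘ xᵐᵢ/2^{m+1}`,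
`Z = G⁻¹(F)` and `Zₙ` the closure of the `n`-th coordinate projection of `Z`, the
`Zₙ` are closed subsets of `{0,1}^I` all of whose elements have finite support, `Z` is
a closed subset of `∏_n Zₙ`, and `G` restricts to a continuous surjection `Z → F`. -/
theorem dyadic_representation_ell0 (I : Type*) (F : Set (I → ℝ))
    (hFcl : IsClosed F) (hFcube : ∀ x ∈ F, ∀ i, x i ∈ Set.Icc (0 : ℝ) 1)
    (hF0 : ∀ x ∈ F, ∀ ε > 0, {i | ε ≤ |x i|}.Finite) :
    let G : (ℕ → I → Bool) → (I → ℝ) :=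
      fun x i => ∑' m : ℕ, (if x m i then (1 : ℝ) else 0) / 2 ^ (m + 1)
    let Z : Set (ℕ → I → Bool) := G ⁻¹' F
    let Zn : ℕ → Set (I → Bool) := fun n => closure ((fun x => x n) '' Z)
    (∀ n, IsClosed (Zn n)) ∧
      (∀ n, ∀ y ∈ Zn n, {i | y i = true}.Finite) ∧
      (∀ x ∈ Z, ∀ n, x n ∈ Zn n) ∧
      IsClosed Z ∧ Continuous G ∧ G '' Z = F := by
  intro G Z Zn
  have hGcont : Continuous G := by
    apply continuous_pi
    intro i
    apply continuous_tsum (u := fun m : ℕ => (1/2:ℝ)^(m+1))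
    · intro m
      have h1 : Continuous fun x : ℕ → I → Bool => x m i :=
        (continuous_apply i).comp (continuous_apply m)
      exact (continuous_of_discreteTopology
        (f := fun b : Bool => (if b then (1:ℝ) else 0) / 2 ^ (m+1))).comp h1
    · simpa [pow_succ, mul_comm] using summable_geometric_two.mul_left (1/2 : ℝ)
    · intro m x
      have h1 : (if x m i then (1:ℝ) else 0) ≤ 1 := by split <;> norm_num
      have h0 : (0:ℝ) ≤ (if x m i then (1:ℝ) else 0) / 2 ^ (m+1) := by positivity
      rw [Real.norm_eq_abs, abs_of_nonneg h0]
      have e : ((1:ℝ)/2)^(m+1) = 1 / 2^(m+1) := by rw [div_pow, one_pow]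
      rw [e]
      gcongr
  have hZcl : IsClosed Z := hFcl.preimage hGcont
  have hZcomp : IsCompact Z := hZcl.isCompact
  have hprojcl : ∀ n, IsClosed ((fun x : ℕ → I → Bool => x n) '' Z) :=
    fun n => (hZcomp.image (continuous_apply n)).isClosed
  have hZn : ∀ n, Zn n = (fun x : ℕ → I → Bool => x n) '' Z :=
    fun n => (hprojcl n).closure_eq
  refine ⟨fun n => isClosed_closure, ?_, ?_, hZcl, hGcont, ?_⟩
  · intro n y hy
    rw [hZn] at hy
    obtain ⟨x, hx, rfl⟩ := hy
    have hGx : G x ∈ F := hx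
    refine (hF0 (G x) hGx (1/2^(n+1)) (by positivity)).subset ?_
    intro i hi
    have hi' : x n i = true := hi
    have hnn : 0 ≤ G x i := tsum_nonneg (fun m => by positivity)
    have hle : (if x n i then (1:ℝ) else 0) / 2 ^ (n+1) ≤ G x i :=
      Summable.le_tsum (summable_dig (fun m => x m i)) n (fun m _ => by positivity)
    rw [hi'] at hle
    simp only [if_true] at hle
    show 1/2^(n+1) ≤ |G x i|
    rw [abs_of_nonneg hnn]
    exact hle
  · exact fun x hx n => subset_closure ⟨x, hx, rfl⟩
  · refine Set.Subset.antisymm ?_ ?_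
    · rintro _ ⟨x, hx, rfl⟩; exact hx
    · intro f hf
      have hGf : G (fun m i => dig (f i) m) = f := by
        funext i
        exact (hasSum_dig (f i) (hFcube f hf i).1 (hFcube f hf i).2).tsum_eq
      refine ⟨fun m i => dig (f i) m, ?_, hGf⟩
      show G (fun m i => dig (f i) m) ∈ F
      rw [hGf]; exact hf
end

section
/- Let I be a set. The space B_1(I) = {x ∈ ℝ^I : ∑_{i∈I}|x_i| ≤ 1}, with the subspace topology induced by the product topology on ℝ^I, is sequentially compact: every sequence in B_1(I) has a subsequence converging pointwise to an element of B_1(I). -/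
open Set Filter Topology

/-- `B_1(I) = {x ∈ ℝ^I : (|x_i|) summable and ∑ |x_i| ≤ 1}`. -/
def B1Ball (I : Type*) : Set (I → ℝ) :=
  {x | Summable (fun i => |x i|) ∧ ∑' i, |x i| ≤ 1}

/-- `B_1(I)`, with the subspace topology induced by the product topology on `ℝ^I`,
is sequentially compact: every sequence in `B_1(I)` has a subsequence converging
pointwise to an element of `B_1(I)`. -/
theorem B1Ball_seqCompact (I : Type*) (u : ℕ → (I → ℝ)) (hu : ∀ k, u k ∈ B1Ball I) :
    ∃ l ∈ B1Ball I, ∃ φ : ℕ → ℕ, StrictMono φ ∧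
      Tendsto (u ∘ φ) atTop (𝓝 l) := by
  classical
  -- the union of supports is countable
  set S : Set I := ⋃ k, Function.support (u k) with hS
  have hScount : S.Countable := by
    apply Set.countable_iUnion
    intro k
    have : Summable (u k) := by
      have := (hu k).1
      exact this.of_abs
    exact this.countable_support
  haveI : Countable S := hScount.to_subtype
  -- each coordinate lies in [-1,1]
  have habs : ∀ k i, |u k i| ≤ 1 := by
    intro k i
    refine le_trans ?_ (hu k).2
    exact Summable.le_tsum (hu k).1 i (fun j _ => abs_nonneg _)
  -- the restricted sequence lives in a compact first-countable space
  have hK : IsCompact (Set.pi univ fun _ : S => Icc (-1 : ℝ) 1) :=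
    isCompact_univ_pi (fun _ => isCompact_Icc)
  have hmem : ∀ k, (fun i : S => u k i) ∈ Set.pi univ (fun _ : S => Icc (-1 : ℝ) 1) :=
    fun k i _ => abs_le.mp (habs k i)
  obtain ⟨l₀, hl₀, φ, hφ, hconv⟩ := hK.tendsto_subseq hmem
  set l : I → ℝ := fun i => if h : i ∈ S then l₀ ⟨i, h⟩ else 0 with hl
  -- pointwise convergence
  have hzero : ∀ k i, i ∉ S → u k i = 0 := by
    intro k i hi
    by_contra h
    exact hi (Set.mem_iUnion.mpr ⟨k, h⟩)
  have hconv' : Tendsto (u ∘ φ) atTop (𝓝 l) := by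
    rw [tendsto_pi_nhds]
    intro i
    by_cases h : i ∈ S
    · have := (tendsto_pi_nhds.mp hconv) ⟨i, h⟩
      simpa [hl, h] using this
    · have : ∀ k, (u ∘ φ) k i = 0 := fun k => hzero _ i h
      simp only [hl, dif_neg h]
      exact tendsto_const_nhds.congr (fun k => (this k).symm)
  -- finite sums of |l| are bounded by 1
  have hsum : ∀ F : Finset I, ∑ i ∈ F, |l i| ≤ 1 := by
    intro F
    have htend : Tendsto (fun k => ∑ i ∈ F, |(u ∘ φ) k i|) atTop (𝓝 (∑ i ∈ F, |l i|)) := by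
      apply tendsto_finset_sum
      intro i _
      exact ((tendsto_pi_nhds.mp hconv') i).abs
    refine le_of_tendsto htend (Eventually.of_forall fun k => ?_)
    calc ∑ i ∈ F, |(u ∘ φ) k i| ≤ ∑' i, |u (φ k) i| := by
          exact Summable.sum_le_tsum F (fun j _ => abs_nonneg _) (hu (φ k)).1
      _ ≤ 1 := (hu (φ k)).2
  have hsummable : Summable (fun i => |l i|) :=
    summable_of_sum_le (fun i => abs_nonneg _) hsum
  exact ⟨l, ⟨hsummable, Summable.tsum_le_of_sum_le hsummable hsum⟩, φ, hφ, hconv'⟩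
end

section
/- Let I be a set and let F be a closed subset of [0,1]^I with F ⊆ c₀(I) (i.e., F is I-Eberlein). Then F is sequentially compact: every sequence in F has a subsequence converging (in [0,1]^I) to an element of F. -/
open Set Filter Topology

lemma czero_support_countable {I : Type*} {x : I → ℝ} (hx : x ∈ czero I) :
    {i | x i ≠ 0}.Countable := by
  have : {i | x i ≠ 0} ⊆ ⋃ n : ℕ, {i | 1 / (n + 1 : ℝ) ≤ |x i|} := by
    intro i hi
    have hpos : 0 < |x i| := abs_pos.mpr hi
    obtain ⟨n, hn⟩ := exists_nat_one_div_lt hpos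
    exact Set.mem_iUnion.mpr ⟨n, le_of_lt hn⟩
  refine Set.Countable.mono this (Set.countable_iUnion fun n => ?_)
  exact (hx _ (by positivity)).countable

/-- A closed subset `F` of `[0,1]^I` with `F ⊆ c₀(I)` (an `I`-Eberlein set) is
sequentially compact: every sequence in `F` has a subsequence converging
(in `[0,1]^I`) to an element of `F`. -/
theorem eberlein_seqCompact (I : Type*) (F : Set (I → ℝ)) (hFcl : IsClosed F)
    (hFcube : ∀ x ∈ F, ∀ i, x i ∈ Set.Icc (0 : ℝ) 1)
    (hFc0 : F ⊆ czero I)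
    (u : ℕ → (I → ℝ)) (hu : ∀ k, u k ∈ F) :
    ∃ l ∈ F, ∃ φ : ℕ → ℕ, StrictMono φ ∧
      Tendsto (u ∘ φ) atTop (𝓝 l) := by
  classical
  set J : Set I := ⋃ k, {i | u k i ≠ 0} with hJdef
  have hJc : J.Countable :=
    Set.countable_iUnion fun k => czero_support_countable (hFc0 (hu k))
  haveI : Countable ↥J := hJc.to_subtype
  -- restrict to coordinates in J
  set v : ℕ → (↥J → ℝ) := fun k j => u k j with hvdef
  have hS : IsCompact {y : ↥J → ℝ | ∀ j, y j ∈ Set.Icc (0:ℝ) 1} := by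
    have := isCompact_univ_pi (fun j : ↥J => isCompact_Icc (a := (0:ℝ)) (b := 1))
    convert this using 1
    ext y; simp [Set.mem_univ_pi, Pi.le_def, Set.mem_Icc, forall_and]
  have hvmem : ∀ k, v k ∈ {y : ↥J → ℝ | ∀ j, y j ∈ Set.Icc (0:ℝ) 1} :=
    fun k j => hFcube _ (hu k) j
  obtain ⟨y, hy, φ, hφ, hconv⟩ := hS.isSeqCompact hvmem
  set l : I → ℝ := fun i => if h : i ∈ J then y ⟨i, h⟩ else 0 with hldef
  have hconv' : Tendsto (u ∘ φ) atTop (𝓝 l) := by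
    rw [tendsto_pi_nhds]
    intro i
    by_cases hi : i ∈ J
    · have := (tendsto_pi_nhds.mp hconv) ⟨i, hi⟩
      simpa [hldef, hi, hvdef, Function.comp] using this
    · have hzero : ∀ k, u k i = 0 := by
        intro k
        by_contra h
        exact hi (Set.mem_iUnion.mpr ⟨k, h⟩)
      simp only [hldef, hi, dif_neg, not_false_iff]
      simp [Function.comp, hzero]
  have hlF : l ∈ F :=
    hFcl.mem_of_tendsto hconv' (Eventually.of_forall fun k => hu (φ k))
  exact ⟨l, hlF, φ, hφ, hconv'⟩
end
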